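/- If β > 1/2, then for any constant C > ⌈(2β+1)/(2β−1)⌉² and all sufficiently large n, f_β(n) ≤ C·ln n. -/

import Mathlib

set_option maxHeartbeats 1000000


/-- A binary sequence is square-free if it contains no nonempty factor of the form `b ++ b`. -/
def SqFree (s : List Bool) : Prop :=
  ¬ ∃ a b c : List Bool, b ≠ [] ∧ s = a ++ (b ++ b) ++ c

/-- Hamming distance between two binary lists (of the same length). -/
def hdist (x y : List Bool) : ℕ := (List.zip x y).countP (fun p => p.1 != p.2)

/-- A `β`-deduplication: replace a substring `v ++ v'` consisting of two adjacent blocks of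
the same length at Hamming distance at most `β·|v|` by `v` or by `v'`. -/
def BDedup (β : ℝ) (x y : List Bool) : Prop :=
  ∃ u v v' w : List Bool, v ≠ [] ∧ v.length = v'.length ∧
    (hdist v v' : ℝ) ≤ β * v.length ∧
    x = u ++ (v ++ v') ++ w ∧ (y = u ++ v ++ w ∨ y = u ++ v' ++ w)

/-- `BDedupSteps β k x y` : `y` is obtained from `x` by exactly `k` β-deduplications. -/
def BDedupSteps (β : ℝ) : ℕ → List Bool → List Bool → Prop
  | 0 => fun x y => x = y
  | k + 1 => fun x y => ∃ z, BDedup β x z ∧ BDedupSteps β k z y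

/-- β-approximate duplication distance: the least number of β-deduplications turning `s`
into a square-free sequence. -/
noncomputable def bdist (β : ℝ) (s : List Bool) : ℕ :=
  sInf {k | ∃ r : List Bool, SqFree r ∧ BDedupSteps β k s r}

/-- Maximum β-approximate duplication distance over binary sequences of length `n`. -/
noncomputable def bfmax (β : ℝ) (n : ℕ) : ℕ :=
  sSup (bdist β '' {s : List Bool | s.length = n})


lemma hdist_nil (y : List Bool) : hdist [] y = 0 := by simp [hdist]

lemma hdist_cons (a b : Bool) (x y : List Bool) :
    hdist (a :: x) (b :: y) = (if a = b then 0 else 1) + hdist x y := by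
  simp [hdist, List.countP_cons]
  cases a <;> cases b <;> simp [List.countP_cons, Nat.add_comm]
  
lemma hdist_self (b : List Bool) : hdist b b = 0 := by
  induction b with
  | nil => simp [hdist_nil]
  | cons a t ih => simp [hdist_cons, ih]

lemma hdist_le (x y : List Bool) : hdist x y ≤ x.length := by
  have := List.countP_le_length (l := List.zip x y) (p := fun p => p.1 != p.2)
  have h2 : (List.zip x y).length ≤ x.length := by
    simp [List.length_zip]
  exact le_trans (by exact this) h2

lemma hdist_eq_sum (x : List Bool) : ∀ y : List Bool, x.length = y.length →
    (hdist x y : ℤ) = ∑ τ ∈ Finset.range x.length,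
      (if x.getD τ false = y.getD τ false then 0 else 1) := by
  induction x with
  | nil => intro y h; simp [hdist_nil]
  | cons a t ih =>
    intro y h
    cases y with
    | nil => simp at h
    | cons b u =>
      simp only [List.length_cons] at h
      have h' : t.length = u.length := by omega
      rw [hdist_cons]
      rw [List.length_cons, Finset.sum_range_succ']
      simp only [List.getD_cons_succ, List.getD_cons_zero]
      rw [← ih u h']
      push_cast
      split <;> ring

lemma getD_drop_take (s : List Bool) (p L τ : ℕ) (hτ : τ < L) :
    ((s.drop p).take L).getD τ false = s.getD (p + τ) false := by
  simp only [List.getD_eq_getElem?_getD]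
  rw [List.getElem?_take, if_pos hτ, List.getElem?_drop]

/-- mismatch indicator -/
def eb (s : List Bool) (a b : ℕ) : ℤ := if s.getD a false = s.getD b false then 0 else 1

lemma eb_nonneg (s a b) : 0 ≤ eb s a b := by unfold eb; split <;> norm_num
lemma eb_le_one (s a b) : eb s a b ≤ 1 := by unfold eb; split <;> norm_num

lemma length_drop_take (s : List Bool) (p L : ℕ) (hp : p + L ≤ s.length) :
    ((s.drop p).take L).length = L := by
  simp [List.length_take, List.length_drop]; omega

lemma hdist_sub (s : List Bool) (p q L : ℕ) (hp : p + L ≤ s.length) (hq : q + L ≤ s.length) :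
    (hdist ((s.drop p).take L) ((s.drop q).take L) : ℤ) =
      ∑ τ ∈ Finset.range L, eb s (p + τ) (q + τ) := by
  rw [hdist_eq_sum _ _ (by rw [length_drop_take s p L hp, length_drop_take s q L hq]),
    length_drop_take s p L hp]
  apply Finset.sum_congr rfl
  intro τ hτ
  rw [Finset.mem_range] at hτ
  rw [getD_drop_take s p L τ hτ, getD_drop_take s q L τ hτ]
  rfl


lemma sum_range_add (f : ℕ → ℤ) (a b : ℕ) :
    ∑ τ ∈ Finset.range (a + b), f τ = ∑ τ ∈ Finset.range a, f τ + ∑ c ∈ Finset.range b, f (a + c) := by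
  induction b with
  | zero => simp
  | succ b ih =>
    rw [show a + (b+1) = (a+b)+1 by omega, Finset.sum_range_succ, ih, Finset.sum_range_succ]
    ring

lemma sum_block (f : ℕ → ℤ) (g h : ℕ) :
    ∑ τ ∈ Finset.range (g * h), f τ = ∑ t ∈ Finset.range g, ∑ c ∈ Finset.range h, f (t * h + c) := by
  induction g with
  | zero => simp
  | succ g ih =>
    rw [show (g+1)*h = g*h + h by ring, sum_range_add, ih, Finset.sum_range_succ]

lemma sum_grid (F : ℕ → ℤ) (g q : ℕ) :
    ∑ j ∈ Finset.range q, ∑ t ∈ Finset.range g, F (j * g + t) = ∑ a ∈ Finset.range (q * g), F a := by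
  induction q with
  | zero => simp
  | succ q ih =>
    rw [Finset.sum_range_succ, ih, show (q+1)*g = q*g + g by ring, sum_range_add]


/-- truncated correlation -/
def Tf (z : ℕ → ℤ) (P : ℕ) (δ : ℕ) : ℤ := ∑ p ∈ Finset.range P, z p * z (p + δ)

lemma shift_sum (N m : ℕ) (hN : 1 ≤ N) (z : ℕ → ℤ) (hz0 : ∀ p, p < N - 1 → z p = 0)
    (hz1 : ∀ p, N - 1 + m ≤ p → z p = 0) (t δ : ℕ) (ht : t ≤ N - 1) :
    ∑ j ∈ Finset.range (m + N - 1), z (j + t) * z (j + t + δ) = Tf z (N - 1 + m) δ := by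
  have h1 : ∑ j ∈ Finset.range (m + N - 1), z (j + t) * z (j + t + δ)
      = ∑ p ∈ Finset.Ico t (t + (m + N - 1)), z p * z (p + δ) := by
    rw [Finset.sum_Ico_eq_sum_range]
    have he : t + (m + N - 1) - t = m + N - 1 := by omega
    rw [he]
    apply Finset.sum_congr rfl
    intro j _
    rw [Nat.add_comm t j]
  rw [h1]
  have hb1 : t ≤ N - 1 + m := by omega
  have hb2 : N - 1 + m ≤ t + (m + N - 1) := by omega
  have h2 : Finset.Ico t (t + (m + N - 1)) = Finset.Ico t (N - 1 + m) ∪ Finset.Ico (N - 1 + m) (t + (m + N - 1)) :=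
    (Finset.Ico_union_Ico_eq_Ico hb1 hb2).symm
  rw [h2, Finset.sum_union (by apply Finset.Ico_disjoint_Ico_consecutive)]
  have h3 : ∑ p ∈ Finset.Ico (N - 1 + m) (t + (m + N - 1)), z p * z (p + δ) = 0 := by
    apply Finset.sum_eq_zero; intro p hp
    rw [Finset.mem_Ico] at hp
    rw [hz1 p hp.1, zero_mul]
  rw [h3, add_zero, Tf]
  rw [Finset.range_eq_Ico]
  have hb3 : (0:ℕ) ≤ t := Nat.zero_le _
  have h4 : Finset.Ico 0 (N - 1 + m) = Finset.Ico 0 t ∪ Finset.Ico t (N - 1 + m) :=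
    (Finset.Ico_union_Ico_eq_Ico hb3 hb1).symm
  rw [h4, Finset.sum_union (by apply Finset.Ico_disjoint_Ico_consecutive)]
  have h5 : ∑ p ∈ Finset.Ico 0 t, z p * z (p + δ) = 0 := by
    apply Finset.sum_eq_zero; intro p hp
    rw [Finset.mem_Ico] at hp
    rw [hz0 p (by omega), zero_mul]
  rw [h5, zero_add]

lemma pair_count (T : ℕ → ℤ) :
    ∀ N : ℕ, ∑ t ∈ Finset.range N, ∑ t' ∈ Finset.range N, T ((t - t') + (t' - t))
      = N * T 0 + 2 * ∑ g ∈ Finset.range N, ((N : ℤ) - (g + 1)) * T (g + 1) := by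
  intro N
  induction N with
  | zero => simp
  | succ N ih =>
    rw [Finset.sum_range_succ]
    have hrow : ∀ t : ℕ, ∑ t' ∈ Finset.range (N + 1), T ((t - t') + (t' - t))
        = (∑ t' ∈ Finset.range N, T ((t - t') + (t' - t))) + T ((t - N) + (N - t)) := by
      intro t; rw [Finset.sum_range_succ]
    simp only [hrow]
    rw [Finset.sum_add_distrib, ih]
    have hrefl : ∑ t ∈ Finset.range N, T ((t - N) + (N - t)) = ∑ g ∈ Finset.range N, T (g + 1) := by
      rw [← Finset.sum_range_reflect (fun i => T (i + 1)) N]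
      apply Finset.sum_congr rfl
      intro t ht; rw [Finset.mem_range] at ht
      congr 1; omega
    have hrefl2 : ∑ t' ∈ Finset.range N, T ((N - t') + (t' - N)) = ∑ g ∈ Finset.range N, T (g + 1) := by
      rw [← Finset.sum_range_reflect (fun i => T (i + 1)) N]
      apply Finset.sum_congr rfl
      intro t ht; rw [Finset.mem_range] at ht
      congr 1; omega
    rw [hrefl, hrefl2]
    have hcorner : T ((N - N) + (N - N)) = T 0 := by norm_num
    rw [hcorner]
    have hlast : ∑ g ∈ Finset.range (N + 1), (((N + 1 : ℕ) : ℤ) - (g + 1)) * T (g + 1)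
        = ∑ g ∈ Finset.range N, (((N + 1 : ℕ) : ℤ) - (g + 1)) * T (g + 1) := by
      rw [Finset.sum_range_succ]; push_cast; ring
    rw [hlast]
    have hcoef : ∀ g ∈ Finset.range N, (((N + 1 : ℕ) : ℤ) - (g + 1)) * T (g + 1)
        = ((N : ℤ) - (g + 1)) * T (g + 1) + T (g + 1) := by
      intro g _; push_cast; ring
    rw [Finset.sum_congr rfl hcoef, Finset.sum_add_distrib]
    push_cast
    ring

lemma pair_sum (N m : ℕ) (hN : 1 ≤ N) (z : ℕ → ℤ) (hz0 : ∀ p, p < N - 1 → z p = 0)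
    (hz1 : ∀ p, N - 1 + m ≤ p → z p = 0) (t t' : ℕ) (ht : t < N) (ht' : t' < N) :
    ∑ j ∈ Finset.range (m + N - 1), z (j + t) * z (j + t')
      = Tf z (N - 1 + m) ((t - t') + (t' - t)) := by
  rcases le_total t t' with h | h
  · have hd : (t - t') + (t' - t) = t' - t := by omega
    rw [hd]
    have : ∀ j, z (j + t) * z (j + t') = z (j + t) * z (j + t + (t' - t)) := by
      intro j; congr 2; omega
    simp only [this]
    exact shift_sum N m hN z hz0 hz1 t (t' - t) (by omega)
  · have hd : (t - t') + (t' - t) = t - t' := by omega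
    rw [hd]
    have : ∀ j, z (j + t) * z (j + t') = z (j + t') * z (j + t' + (t - t')) := by
      intro j; rw [mul_comm]; congr 2; omega
    simp only [this]
    exact shift_sum N m hN z hz0 hz1 t' (t - t') (by omega)

lemma sos_expand (N m : ℕ) (hN : 1 ≤ N) (z : ℕ → ℤ) (hz0 : ∀ p, p < N - 1 → z p = 0)
    (hz1 : ∀ p, N - 1 + m ≤ p → z p = 0) :
    0 ≤ (N : ℤ) * Tf z (N - 1 + m) 0
      + 2 * ∑ g ∈ Finset.range N, ((N : ℤ) - (g + 1)) * Tf z (N - 1 + m) (g + 1) := by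
  have key : ∑ j ∈ Finset.range (m + N - 1), (∑ t ∈ Finset.range N, z (j + t)) ^ 2
      = (N : ℤ) * Tf z (N - 1 + m) 0
        + 2 * ∑ g ∈ Finset.range N, ((N : ℤ) - (g + 1)) * Tf z (N - 1 + m) (g + 1) := by
    have hsq : ∀ j, (∑ t ∈ Finset.range N, z (j + t)) ^ 2
        = ∑ t ∈ Finset.range N, ∑ t' ∈ Finset.range N, z (j + t) * z (j + t') := by
      intro j; rw [sq, Finset.sum_mul_sum]
    simp only [hsq]
    rw [Finset.sum_comm]
    have hswap : ∀ t ∈ Finset.range N, ∑ j ∈ Finset.range (m + N - 1), ∑ t' ∈ Finset.range N, z (j + t) * z (j + t')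
        = ∑ t' ∈ Finset.range N, Tf z (N - 1 + m) ((t - t') + (t' - t)) := by
      intro t ht
      rw [Finset.sum_comm]
      apply Finset.sum_congr rfl
      intro t' ht'
      exact pair_sum N m hN z hz0 hz1 t t' (Finset.mem_range.mp ht) (Finset.mem_range.mp ht')
    rw [Finset.sum_congr rfl hswap]
    exact pair_count (Tf z (N - 1 + m)) N
  rw [← key]
  exact Finset.sum_nonneg fun j _ => sq_nonneg _

lemma col_ineq (N m : ℕ) (hN : 1 ≤ N) (hNm : N ≤ m) (y : ℕ → ℤ)
    (hy : ∀ a, a < m → y a = 1 ∨ y a = -1) :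
    4 * ∑ g ∈ Finset.Icc 1 (N - 1), ((N : ℤ) - g) *
        (∑ a ∈ Finset.range (m - g), (if y a = y (a + g) then (0 : ℤ) else 1))
      ≤ 2 * ∑ g ∈ Finset.Icc 1 (N - 1), ((N : ℤ) - g) * ((m : ℤ) - g) + N * m := by
  set z : ℕ → ℤ := fun p => if p < N - 1 then 0 else if p < N - 1 + m then y (p - (N - 1)) else 0 with hz
  have hz0 : ∀ p, p < N - 1 → z p = 0 := by intro p hp; simp [hz, hp]
  have hz1 : ∀ p, N - 1 + m ≤ p → z p = 0 := by
    intro p hp; simp only [hz]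
    rw [if_neg (by omega), if_neg (by omega)]
  have hzval : ∀ a, a < m → z (N - 1 + a) = y a := by
    intro a ha; simp only [hz]
    rw [if_neg (by omega), if_pos (by omega)]
    congr 1; omega
  have split : ∀ δ, Tf z (N - 1 + m) δ = ∑ a ∈ Finset.range m, z (N - 1 + a) * z (N - 1 + a + δ) := by
    intro δ
    unfold Tf
    rw [Finset.range_eq_Ico]
    have h4 : Finset.Ico 0 (N - 1 + m) = Finset.Ico 0 (N - 1) ∪ Finset.Ico (N - 1) (N - 1 + m) :=
      (Finset.Ico_union_Ico_eq_Ico (Nat.zero_le _) (Nat.le_add_right _ _)).symm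
    rw [h4, Finset.sum_union (Finset.Ico_disjoint_Ico_consecutive _ _ _)]
    have h5 : ∑ p ∈ Finset.Ico 0 (N - 1), z p * z (p + δ) = 0 := by
      apply Finset.sum_eq_zero; intro p hp
      rw [Finset.mem_Ico] at hp
      rw [hz0 p hp.2, zero_mul]
    rw [h5, zero_add, Finset.sum_Ico_eq_sum_range]
    have he : N - 1 + m - (N - 1) = m := by omega
    rw [he, Finset.range_eq_Ico]
  have h0 : Tf z (N - 1 + m) 0 = (m : ℤ) := by
    rw [split 0]
    have : ∀ a ∈ Finset.range m, z (N - 1 + a) * z (N - 1 + a + 0) = 1 := by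
      intro a ha
      rw [Finset.mem_range] at ha
      rw [add_zero, hzval a ha]
      rcases hy a ha with h | h <;> rw [h] <;> norm_num
    rw [Finset.sum_congr rfl this, Finset.sum_const, Finset.card_range]
    simp
  have hg : ∀ g, 1 ≤ g → g ≤ N - 1 → Tf z (N - 1 + m) g
      = ((m : ℤ) - g) - 2 * ∑ a ∈ Finset.range (m - g), (if y a = y (a + g) then (0 : ℤ) else 1) := by
    intro g hg1 hg2
    rw [split g]
    have hstep : ∀ a ∈ Finset.range m, z (N - 1 + a) * z (N - 1 + a + g)
        = if a + g < m then y a * y (a + g) else 0 := by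
      intro a ha
      rw [Finset.mem_range] at ha
      rw [hzval a ha]
      by_cases h : a + g < m
      · rw [if_pos h, show N - 1 + a + g = N - 1 + (a + g) by omega, hzval _ h]
      · rw [if_neg h]
        have : z (N - 1 + a + g) = 0 := by
          apply hz1; omega
        rw [this, mul_zero]
    rw [Finset.sum_congr rfl hstep]
    rw [← Finset.sum_subset (Finset.range_subset_range.mpr (Nat.sub_le m g))
      (by intro a _ ha2; rw [Finset.mem_range] at ha2; rw [if_neg (by omega)])]
    have hpt : ∀ a ∈ Finset.range (m - g), (if a + g < m then y a * y (a + g) else 0)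
        = 1 - 2 * (if y a = y (a + g) then (0 : ℤ) else 1) := by
      intro a ha
      rw [Finset.mem_range] at ha
      rw [if_pos (by omega)]
      rcases hy a (by omega) with h1 | h1 <;> rcases hy (a + g) (by omega) with h2 | h2 <;>
        rw [h1, h2] <;> norm_num
    rw [Finset.sum_congr rfl hpt, Finset.sum_sub_distrib, Finset.sum_const, Finset.card_range,
      ← Finset.mul_sum]
    have : ((m - g : ℕ) : ℤ) = (m : ℤ) - g := by
      have : g ≤ m := by omega
      push_cast [this]; ring
    rw [nsmul_eq_mul, this]; ring
  -- main
  have hsos := sos_expand N m hN z hz0 hz1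
  rw [h0] at hsos
  have hsplit : ∑ g ∈ Finset.range N, ((N : ℤ) - (g + 1)) * Tf z (N - 1 + m) (g + 1)
      = ∑ g ∈ Finset.range (N - 1), ((N : ℤ) - (g + 1)) * Tf z (N - 1 + m) (g + 1) := by
    refine (Finset.sum_subset (Finset.range_subset_range.mpr (by omega)) ?_).symm
    intro g hgN hgn
    rw [Finset.mem_range] at hgN hgn
    have hgeq : g = N - 1 := by omega
    subst hgeq
    have hc : ((N : ℤ) - (((N - 1 : ℕ) : ℤ) + 1)) = 0 := by
      rw [Nat.cast_sub hN]; ring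
    rw [hc, zero_mul]
  rw [hsplit] at hsos
  have hIcc : ∑ g ∈ Finset.Icc 1 (N - 1), ((N : ℤ) - g) *
        (((m : ℤ) - g) - 2 * ∑ a ∈ Finset.range (m - g), (if y a = y (a + g) then (0 : ℤ) else 1))
      = ∑ g ∈ Finset.range (N - 1), ((N : ℤ) - (g + 1)) * Tf z (N - 1 + m) (g + 1) := by
    have hIco : Finset.Icc 1 (N - 1) = Finset.Ico 1 N := by
      rw [← Finset.Ico_add_one_right_eq_Icc]; congr 1; omega
    rw [hIco, Finset.sum_Ico_eq_sum_range, show N - 1 = N - 1 from rfl]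
    apply Finset.sum_congr rfl
    intro g hgr
    rw [Finset.mem_range] at hgr
    rw [show 1 + g = g + 1 by omega, hg (g + 1) (by omega) (by omega)]
    push_cast
    ring
  rw [← hIcc] at hsos
  have hexp : ∑ g ∈ Finset.Icc 1 (N - 1), ((N : ℤ) - g) *
        (((m : ℤ) - g) - 2 * ∑ a ∈ Finset.range (m - g), (if y a = y (a + g) then (0 : ℤ) else 1))
      = ∑ g ∈ Finset.Icc 1 (N - 1), ((N : ℤ) - g) * ((m : ℤ) - g)
        - 2 * ∑ g ∈ Finset.Icc 1 (N - 1), ((N : ℤ) - g) *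
            (∑ a ∈ Finset.range (m - g), (if y a = y (a + g) then (0 : ℤ) else 1)) := by
    rw [Finset.mul_sum, ← Finset.sum_sub_distrib]
    apply Finset.sum_congr rfl
    intro g _; ring
  rw [hexp] at hsos
  linarith


lemma gauss2 : ∀ L : ℕ, 2 * ∑ i ∈ Finset.range L, (i : ℤ) = L^2 - L := by
  intro L
  induction L with
  | zero => simp
  | succ L ih => rw [Finset.sum_range_succ]; push_cast; push_cast at ih; ring_nf; ring_nf at ih; linarith

lemma sum_lin : ∀ L : ℕ, 2 * ∑ i ∈ Finset.range L, ((L:ℤ) - i) = L^2 + L := by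
  intro L
  have : ∑ i ∈ Finset.range L, ((L:ℤ) - i) = ∑ i ∈ Finset.range L, ((L:ℤ)) - ∑ i ∈ Finset.range L, (i:ℤ) := by
    rw [← Finset.sum_sub_distrib]
  rw [this, Finset.sum_const, Finset.card_range, nsmul_eq_mul]
  have := gauss2 L
  push_cast
  nlinarith [this]

lemma sum_quad : ∀ L : ℕ, 6 * ∑ i ∈ Finset.range L, ((L:ℤ) - i) * i = L^3 - L := by
  intro L
  induction L with
  | zero => simp
  | succ L ih =>
    rw [Finset.sum_range_succ]
    have hstep : ∑ i ∈ Finset.range L, (((L+1:ℕ):ℤ) - i) * i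
        = ∑ i ∈ Finset.range L, (((L:ℤ) - i) * i + i) := by
      apply Finset.sum_congr rfl; intro i _; push_cast; ring
    rw [hstep, Finset.sum_add_distrib]
    have hg := gauss2 L
    push_cast
    push_cast at ih hg
    nlinarith [ih, hg]

lemma Ico1_sum (F : ℕ → ℤ) (K : ℕ) (hK : 1 ≤ K) :
    ∑ g ∈ Finset.Icc 1 (K-1), F g + F 0 = ∑ g ∈ Finset.range K, F g := by
  have h1 : Finset.Icc 1 (K-1) = Finset.Ico 1 K := by
    rw [← Finset.Ico_add_one_right_eq_Icc]; congr 1; omega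
  rw [h1, Finset.range_eq_Ico, ← Finset.sum_Ico_consecutive _ (Nat.zero_le 1) hK]
  have h2 : ∑ g ∈ Finset.Ico 0 1, F g = F 0 := by simp
  rw [h2]; ring

lemma idS1 (K : ℕ) (hK : 1 ≤ K) :
    2 * ∑ g ∈ Finset.Icc 1 (K-1), ((K:ℤ) - g) = K^2 - K := by
  have := Ico1_sum (fun g => (K:ℤ) - g) K hK
  simp only [Nat.cast_zero, sub_zero] at this
  have h2 := sum_lin K
  linarith

lemma idA (K : ℕ) (hK : 1 ≤ K) :
    6 * ∑ g ∈ Finset.Icc 1 (K-1), ((K:ℤ) - g) * g = K^3 - K := by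
  have := Ico1_sum (fun g => ((K:ℤ) - g) * g) K hK
  simp only [Nat.cast_zero, mul_zero, add_zero] at this
  have h2 := sum_quad K
  linarith

lemma idP (K m : ℕ) :
    ∑ g ∈ Finset.Icc 1 (K-1), ((K:ℤ) - g) * ((m:ℤ) - g)
      = (m:ℤ) * (∑ g ∈ Finset.Icc 1 (K-1), ((K:ℤ) - g))
        - ∑ g ∈ Finset.Icc 1 (K-1), ((K:ℤ) - g) * g := by
  rw [Finset.mul_sum, ← Finset.sum_sub_distrib]
  apply Finset.sum_congr rfl
  intro g _; ring

lemma final_arith (K : ℕ) (hK2 : 2 ≤ K) (β : ℝ) (hβK : 1/2 + 1/((K:ℝ)-1) ≤ β) :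
    ((2 * ∑ g ∈ Finset.Icc 1 (K-1), ((K:ℤ) - g) * (((K^2 : ℕ):ℤ) - g)
        + K * (K^2 : ℕ) + 4 * ∑ g ∈ Finset.Icc 1 (K-1), ((K:ℤ) - g) * g : ℤ) : ℝ)
      ≤ 4 * β * ((∑ g ∈ Finset.Icc 1 (K-1), ((K:ℤ) - g) * (((K^2 : ℕ):ℤ) - g) : ℤ) : ℝ) := by
  have hK1 : (1:ℕ) ≤ K := by omega
  set P : ℤ := ∑ g ∈ Finset.Icc 1 (K-1), ((K:ℤ) - g) * (((K^2 : ℕ):ℤ) - g) with hP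
  set A : ℤ := ∑ g ∈ Finset.Icc 1 (K-1), ((K:ℤ) - g) * g with hA
  set S : ℤ := ∑ g ∈ Finset.Icc 1 (K-1), ((K:ℤ) - g) with hS
  have hidP : P = ((K^2 : ℕ):ℤ) * S - A := idP K (K^2)
  have hidS : 2 * S = (K:ℤ)^2 - K := idS1 K hK1
  have hidA : 6 * A = (K:ℤ)^3 - K := idA K hK1
  have hK2' : (2:ℤ) ≤ (K:ℤ) := by exact_mod_cast hK2
  have hcast : ((K^2 : ℕ):ℤ) = (K:ℤ)^2 := by push_cast; ring
  rw [hcast] at hidP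
  -- integer inequality: (K-1)*(K^3 + 4A) ≤ 4P and P ≥ 0
  have h0 : (0:ℤ) ≤ ((K:ℤ)-1)*((K:ℤ)-2) :=
    mul_nonneg (by linarith) (by linarith)
  have hsq : (0:ℤ) ≤ (K:ℤ)^2 := sq_nonneg _
  have hpos : (0:ℤ) ≤ 2*(K:ℤ)^4 - 6*(K:ℤ)^3 + 4*(K:ℤ)^2 := by nlinarith [h0, hsq]
  have key : 6*(((K:ℤ)-1)*((K:ℤ)^3+4*A)) + (2*(K:ℤ)^4 - 6*(K:ℤ)^3 + 4*(K:ℤ)^2) = 6*(4*P) := by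
    rw [hidP]
    linear_combination (4*(K:ℤ))*hidA + (-12*(K:ℤ)^2)*hidS
  have hZ : ((K:ℤ) - 1) * ((K:ℤ)^3 + 4*A) ≤ 4 * P := by linarith [key, hpos]
  have hPge : (0:ℤ) ≤ P := by
    apply Finset.sum_nonneg
    intro g hg
    rw [Finset.mem_Icc] at hg
    have h1 : (g:ℤ) ≤ (K:ℤ) - 1 := by
      have : g ≤ K - 1 := hg.2
      omega
    have : (0:ℤ) ≤ (K:ℤ) - g := by linarith
    apply mul_nonneg this
    have : (g:ℤ) ≤ ((K:ℤ))^2 := by nlinarith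
    rw [hcast]; linarith
  -- real part
  have hKR : (1:ℝ) ≤ (K:ℝ) - 1 := by
    have : (2:ℝ) ≤ (K:ℝ) := by exact_mod_cast hK2
    linarith
  have hKR0 : (0:ℝ) < (K:ℝ) - 1 := by linarith
  have hZR : ((K:ℝ) - 1) * ((K:ℝ)^3 + 4*(A:ℝ)) ≤ 4 * (P:ℝ) := by exact_mod_cast hZ
  have hPgeR : (0:ℝ) ≤ (P:ℝ) := by exact_mod_cast hPge
  have hβP : (2 + 4 / ((K:ℝ)-1)) * (P:ℝ) ≤ 4 * β * (P:ℝ) := by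
    apply mul_le_mul_of_nonneg_right _ hPgeR
    have : 4 / ((K:ℝ)-1) = 4 * (1/((K:ℝ)-1)) := by ring
    rw [this]; linarith
  have hmain : ((2*P + K*(K^2:ℕ) + 4*A : ℤ) : ℝ) ≤ (2 + 4 / ((K:ℝ)-1)) * (P:ℝ) := by
    push_cast
    rw [add_mul]
    have h4 : 4 / ((K:ℝ)-1) * (P:ℝ) ≥ (K:ℝ)^3 + 4*(A:ℝ) := by
      rw [ge_iff_le, div_mul_eq_mul_div, le_div_iff₀ hKR0]
      linarith [hZR]
    push_cast at h4 ⊢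
    nlinarith [h4]
  calc ((2*P + K*(K^2:ℕ) + 4*A : ℤ) : ℝ) ≤ (2 + 4 / ((K:ℝ)-1)) * (P:ℝ) := hmain
    _ ≤ 4 * β * (P:ℝ) := hβP

lemma exists_sqfree_steps (β : ℝ) (hβ : 0 ≤ β) (n : ℕ) :
    ∀ s : List Bool, s.length ≤ n → ∃ j r, j ≤ s.length ∧ SqFree r ∧ BDedupSteps β j s r := by
  induction n with
  | zero =>
    intro s hs
    refine ⟨0, s, Nat.zero_le _, ?_, rfl⟩
    intro ⟨a, b, c, hb, habc⟩
    have : 1 ≤ b.length := List.length_pos_iff.mpr hb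
    have := congrArg List.length habc
    simp at this; omega
    
  | succ n ih =>
    intro s hs
    by_cases hsf : SqFree s
    · exact ⟨0, s, Nat.zero_le _, hsf, rfl⟩
    · rw [SqFree, not_not] at hsf
      obtain ⟨a, b, c, hb, habc⟩ := hsf
      have hb1 : 1 ≤ b.length := List.length_pos_iff.mpr hb
      have hlen : s.length = a.length + (b.length + b.length) + c.length := by
        subst habc; simp; ring
      have hy : (a ++ b ++ c).length ≤ n := by simp; omega
      obtain ⟨j, r, hj, hr, hsteps⟩ := ih (a ++ b ++ c) hy
      refine ⟨j + 1, r, by simp at hj ⊢; omega, hr, ⟨a ++ b ++ c, ?_, hsteps⟩⟩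
      refine ⟨a, b, b, c, hb, rfl, by simp [hdist_self]; positivity, habc, Or.inl (by simp)⟩


def Eg (s : List Bool) (h g a : ℕ) : ℤ :=
  ∑ c ∈ Finset.range h, eb s (a * h + c) ((a + g) * h + c)

lemma Eg_nonneg (s h g a) : 0 ≤ Eg s h g a := Finset.sum_nonneg fun c _ => eb_nonneg _ _ _

lemma Eg_le (s h g a) : Eg s h g a ≤ (h : ℤ) := by
  calc Eg s h g a ≤ ∑ c ∈ Finset.range h, 1 := Finset.sum_le_sum fun c _ => eb_le_one _ _ _
    _ = (h : ℤ) := by simp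

lemma M_decomp (s : List Bool) (h i g : ℕ) :
    ∑ τ ∈ Finset.range (g * h), eb s (i * h + τ) ((i + g) * h + τ)
      = ∑ t ∈ Finset.range g, Eg s h g (i + t) := by
  rw [sum_block]
  apply Finset.sum_congr rfl
  intro t _
  unfold Eg
  apply Finset.sum_congr rfl
  intro c _
  congr 1 <;> ring

lemma if_pm (b1 b2 : Bool) :
    (if (if b1 then (1:ℤ) else -1) = (if b2 then (1:ℤ) else -1) then (0:ℤ) else 1)
      = if b1 = b2 then (0:ℤ) else 1 := by
  cases b1 <;> cases b2 <;> norm_num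

lemma exists_dedup (β : ℝ) (hβ : 1 / 2 < β) (K : ℕ) (hK2 : 2 ≤ K)
    (hβK : 1 / 2 + 1 / ((K : ℝ) - 1) ≤ β) (s : List Bool) (hs : K ^ 2 ≤ s.length) :
    ∃ y : List Bool, BDedup β s y ∧ y.length + s.length / K ^ 2 ≤ s.length := by
  have hβ0 : (0:ℝ) ≤ β := by linarith
  set n := s.length with hn
  set m := K ^ 2 with hmdef
  set h := n / m with hhdef
  have hK0 : 0 < K := by omega
  have hm0 : 0 < m := pow_pos hK0 2
  have hh1 : 1 ≤ h := (Nat.one_le_div_iff hm0).mpr hs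
  have hmh : m * h ≤ n := by rw [hhdef, Nat.mul_comm]; exact Nat.div_mul_le_self n m
  have hKm : K ≤ m := by
    rw [hmdef]; exact Nat.le_self_pow (by norm_num) K
  have hK1 : 1 ≤ K := by omega
  have hgood : ∃ i g, 1 ≤ g ∧ g ≤ K - 1 ∧ i + 2 * g ≤ m ∧
      ((hdist ((s.drop (i*h)).take (g*h)) ((s.drop ((i+g)*h)).take (g*h)) : ℕ) : ℝ)
        ≤ β * ((g * h : ℕ) : ℝ) := by
    by_contra hno
    push_neg at hno
    have hM : ∀ i g, 1 ≤ g → g ≤ K - 1 → i + 2 * g ≤ m →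
        β * ((g * h : ℕ) : ℝ) < ((∑ t ∈ Finset.range g, Eg s h g (i + t) : ℤ) : ℝ) := by
      intro i g h1 h2 h3
      have hlen1 : i * h + g * h ≤ n := by
        calc i * h + g * h = (i + g) * h := by ring
          _ ≤ m * h := Nat.mul_le_mul_right h (by omega)
          _ ≤ n := hmh
      have hlen2 : (i + g) * h + g * h ≤ n := by
        calc (i + g) * h + g * h = (i + 2 * g) * h := by ring
          _ ≤ m * h := Nat.mul_le_mul_right h h3
          _ ≤ n := hmh
      have hbridge := hdist_sub s (i*h) ((i+g)*h) (g*h) hlen1 hlen2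
      have hlt := hno i g h1 h2 h3
      rw [← M_decomp]
      have hcast : ((hdist ((s.drop (i*h)).take (g*h)) ((s.drop ((i+g)*h)).take (g*h)) : ℕ) : ℝ)
          = ((∑ τ ∈ Finset.range (g*h), eb s (i*h + τ) ((i+g)*h + τ) : ℤ) : ℝ) := by
        rw [← hbridge]; push_cast; ring
      rw [← hcast]
      exact hlt
    -- step 2 : per-gap inequality
    have step2 : ∀ g, 1 ≤ g → g ≤ K - 1 →
        β * (h : ℝ) * ((m : ℝ) - (g : ℝ))
          < ((∑ a ∈ Finset.range (m - g), Eg s h g a : ℤ) : ℝ) + (g : ℝ) * (h : ℝ) := by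
      intro g hg1 hg2
      have hg0 : 0 < g := hg1
      have h2g : 2 * g ≤ m := by
        have h1 : 2 * K ≤ K * K := Nat.mul_le_mul_right K hK2
        have h2 : m = K * K := by rw [hmdef]; ring
        omega
      set q := (m - g) / g with hqdef
      have hq1 : q * g ≤ m - g := Nat.div_mul_le_self _ _
      have hdm := Nat.div_add_mod (m - g) g
      have hmod : (m - g) % g < g := Nat.mod_lt _ hg0
      have hq2 : m - g < (q + 1) * g := by
        have e2 : (q + 1) * g = g * q + g := by ring
        have e1 : g * ((m - g) / g) + (m - g) % g = m - g := hdm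
        rw [← hqdef] at e1
        omega
      have hjv : ∀ j ∈ Finset.range q,
          β * ((g * h : ℕ) : ℝ) ≤ ((∑ t ∈ Finset.range g, Eg s h g (j * g + t) : ℤ) : ℝ) := by
        intro j hj
        rw [Finset.mem_range] at hj
        apply le_of_lt
        apply hM (j * g) g hg1 hg2
        have e3 : j + 1 ≤ q := hj
        have e4 : (j + 1) * g ≤ q * g := Nat.mul_le_mul_right g e3
        have e5 : (j + 1) * g = j * g + g := by ring
        omega
      have hsum1 : (q : ℝ) * (β * ((g * h : ℕ) : ℝ))
          ≤ ∑ j ∈ Finset.range q, ((∑ t ∈ Finset.range g, Eg s h g (j * g + t) : ℤ) : ℝ) := by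
        have := Finset.card_nsmul_le_sum (Finset.range q)
          (fun j => ((∑ t ∈ Finset.range g, Eg s h g (j * g + t) : ℤ) : ℝ))
          (β * ((g * h : ℕ) : ℝ)) hjv
        rw [Finset.card_range, nsmul_eq_mul] at this
        exact this
      have hend1 : β * ((g * h : ℕ) : ℝ)
          < ((∑ t ∈ Finset.range g, Eg s h g ((m - 2 * g) + t) : ℤ) : ℝ) :=
        hM (m - 2 * g) g hg1 hg2 (by omega)
      have hend2 : (∑ t ∈ Finset.range g, Eg s h g ((m - 2 * g) + t) : ℤ) ≤ (g : ℤ) * (h : ℤ) := by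
        calc (∑ t ∈ Finset.range g, Eg s h g ((m - 2 * g) + t) : ℤ)
            ≤ ∑ t ∈ Finset.range g, (h : ℤ) := Finset.sum_le_sum fun t _ => Eg_le _ _ _ _
          _ = (g : ℤ) * (h : ℤ) := by simp [mul_comm]
      have hgrid : ∑ j ∈ Finset.range q, (∑ t ∈ Finset.range g, Eg s h g (j * g + t))
          = ∑ a ∈ Finset.range (q * g), Eg s h g a := sum_grid (Eg s h g) g q
      have hsub : ∑ a ∈ Finset.range (q * g), Eg s h g a
          ≤ ∑ a ∈ Finset.range (m - g), Eg s h g a := by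
        apply Finset.sum_le_sum_of_subset_of_nonneg (Finset.range_subset_range.mpr hq1)
        intro a _ _
        exact Eg_nonneg _ _ _ _
      -- combine
      have hZle : (∑ j ∈ Finset.range q, (∑ t ∈ Finset.range g, Eg s h g (j * g + t)) : ℤ)
          ≤ ∑ a ∈ Finset.range (m - g), Eg s h g a := by rw [hgrid]; exact hsub
      have hc1 : ((m : ℝ) - (g : ℝ)) ≤ ((q : ℝ) + 1) * (g : ℝ) := by
        have := hq2
        have hgm : g ≤ m := by omega
        have : ((m - g : ℕ) : ℝ) ≤ (((q + 1) * g : ℕ) : ℝ) := by exact_mod_cast le_of_lt hq2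
        push_cast [hgm] at this
        linarith
      have hc2 : β * (h : ℝ) * ((m : ℝ) - (g : ℝ)) ≤ ((q : ℝ) + 1) * (β * ((g * h : ℕ) : ℝ)) := by
        have hβh : (0:ℝ) ≤ β * (h : ℝ) := by positivity
        calc β * (h : ℝ) * ((m : ℝ) - (g : ℝ)) ≤ β * (h : ℝ) * (((q : ℝ) + 1) * (g : ℝ)) :=
              mul_le_mul_of_nonneg_left hc1 hβh
          _ = ((q : ℝ) + 1) * (β * ((g * h : ℕ) : ℝ)) := by push_cast; ring
      have hstrict : ((q : ℝ) + 1) * (β * ((g * h : ℕ) : ℝ))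
          < ((∑ a ∈ Finset.range (m - g), Eg s h g a : ℤ) : ℝ) + (g : ℝ) * (h : ℝ) := by
        have hA : (q : ℝ) * (β * ((g * h : ℕ) : ℝ))
            ≤ ((∑ a ∈ Finset.range (m - g), Eg s h g a : ℤ) : ℝ) := by
          calc (q : ℝ) * (β * ((g * h : ℕ) : ℝ))
              ≤ ∑ j ∈ Finset.range q, ((∑ t ∈ Finset.range g, Eg s h g (j * g + t) : ℤ) : ℝ) := hsum1
            _ = ((∑ j ∈ Finset.range q, (∑ t ∈ Finset.range g, Eg s h g (j * g + t)) : ℤ) : ℝ) := by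
                push_cast; ring
            _ ≤ _ := by exact_mod_cast hZle
        have hB : β * ((g * h : ℕ) : ℝ) < (g : ℝ) * (h : ℝ) := by
          calc β * ((g * h : ℕ) : ℝ)
              < ((∑ t ∈ Finset.range g, Eg s h g ((m - 2 * g) + t) : ℤ) : ℝ) := hend1
            _ ≤ ((g : ℤ) * (h : ℤ) : ℝ) := by exact_mod_cast hend2
            _ = (g : ℝ) * (h : ℝ) := by push_cast; ring
        nlinarith [hA, hB]
      calc β * (h : ℝ) * ((m : ℝ) - (g : ℝ)) ≤ ((q : ℝ) + 1) * (β * ((g * h : ℕ) : ℝ)) := hc2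
        _ < _ := hstrict
    -- step 3 : column inequality summed over columns
    have step3 : 4 * ∑ g ∈ Finset.Icc 1 (K - 1), ((K : ℤ) - g) *
          (∑ a ∈ Finset.range (m - g), Eg s h g a)
        ≤ (h : ℤ) * (2 * ∑ g ∈ Finset.Icc 1 (K - 1), ((K : ℤ) - g) * ((m : ℤ) - g) + K * m) := by
      have hcol : ∀ c, c < h → 4 * ∑ g ∈ Finset.Icc 1 (K - 1), ((K : ℤ) - g) *
            (∑ a ∈ Finset.range (m - g), eb s (a * h + c) ((a + g) * h + c))
          ≤ 2 * ∑ g ∈ Finset.Icc 1 (K - 1), ((K : ℤ) - g) * ((m : ℤ) - g) + K * m := by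
        intro c _
        have := col_ineq K m hK1 hKm (fun a => if s.getD (a * h + c) false then (1:ℤ) else -1)
          (fun a _ => by split <;> simp)
        convert this using 4 with g hg
        apply Finset.sum_congr rfl
        intro a _
        rw [if_pm]
        rfl
      have hsumc := Finset.sum_le_sum (fun c hc => hcol c (Finset.mem_range.mp hc))
      have hlhs : ∑ c ∈ Finset.range h, (4 * ∑ g ∈ Finset.Icc 1 (K - 1), ((K : ℤ) - g) *
            (∑ a ∈ Finset.range (m - g), eb s (a * h + c) ((a + g) * h + c)))
          = 4 * ∑ g ∈ Finset.Icc 1 (K - 1), ((K : ℤ) - g) *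
            (∑ a ∈ Finset.range (m - g), Eg s h g a) := by
        rw [← Finset.mul_sum]
        congr 1
        rw [Finset.sum_comm]
        apply Finset.sum_congr rfl
        intro g _
        rw [← Finset.mul_sum]
        congr 1
        rw [Finset.sum_comm]
        simp only [Eg]
      have hrhs : ∑ c ∈ Finset.range h, (2 * ∑ g ∈ Finset.Icc 1 (K - 1), ((K : ℤ) - g) * ((m : ℤ) - g) + (K : ℤ) * m)
          = (h : ℤ) * (2 * ∑ g ∈ Finset.Icc 1 (K - 1), ((K : ℤ) - g) * ((m : ℤ) - g) + K * m) := by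
        rw [Finset.sum_const, Finset.card_range, nsmul_eq_mul]
      rw [hlhs, hrhs] at hsumc
      exact hsumc
    -- step 4 : combine in ℝ
    have hne : (Finset.Icc 1 (K - 1)).Nonempty := by
      refine Finset.nonempty_Icc.mpr ?_
      omega
    have step4 : ∑ g ∈ Finset.Icc 1 (K - 1), ((K : ℝ) - g) * (β * (h : ℝ) * ((m : ℝ) - g))
        < ∑ g ∈ Finset.Icc 1 (K - 1), ((K : ℝ) - g) *
            (((∑ a ∈ Finset.range (m - g), Eg s h g a : ℤ) : ℝ) + (g : ℝ) * (h : ℝ)) := by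
      apply Finset.sum_lt_sum_of_nonempty hne
      intro g hg
      rw [Finset.mem_Icc] at hg
      have hKg : (0:ℝ) < (K : ℝ) - g := by
        have : (g : ℝ) ≤ (K : ℝ) - 1 := by
          have : g ≤ K - 1 := hg.2
          have : (g:ℝ) ≤ ((K-1 : ℕ):ℝ) := by exact_mod_cast this
          rw [Nat.cast_sub hK1] at this
          simpa using this
        linarith
      exact mul_lt_mul_of_pos_left (step2 g hg.1 hg.2) hKg
    -- cast step3 to ℝ and derive contradiction
    set X : ℤ := ∑ g ∈ Finset.Icc 1 (K - 1), ((K : ℤ) - g) *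
      (∑ a ∈ Finset.range (m - g), Eg s h g a) with hXdef
    set P : ℤ := ∑ g ∈ Finset.Icc 1 (K - 1), ((K : ℤ) - g) * ((m : ℤ) - g) with hPdef
    set A : ℤ := ∑ g ∈ Finset.Icc 1 (K - 1), ((K : ℤ) - g) * g with hAdef
    have hlhs4 : ∑ g ∈ Finset.Icc 1 (K - 1), ((K : ℝ) - g) * (β * (h : ℝ) * ((m : ℝ) - g))
        = β * (h : ℝ) * (P : ℝ) := by
      rw [hPdef]
      push_cast
      rw [Finset.mul_sum]
      apply Finset.sum_congr rfl
      intro g _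
      ring
    have hrhs4 : ∑ g ∈ Finset.Icc 1 (K - 1), ((K : ℝ) - g) *
          (((∑ a ∈ Finset.range (m - g), Eg s h g a : ℤ) : ℝ) + (g : ℝ) * (h : ℝ))
        = ((∑ g ∈ Finset.Icc 1 (K - 1), ((K : ℤ) - g) *
            (∑ a ∈ Finset.range (m - g), Eg s h g a) : ℤ) : ℝ) + (h : ℝ) * (A : ℝ) := by
      rw [hAdef]
      push_cast
      rw [Finset.mul_sum, ← Finset.sum_add_distrib]
      apply Finset.sum_congr rfl
      intro g _
      ring
    rw [hlhs4, hrhs4] at step4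
    have hstep3R : 4 * (X : ℝ) ≤ (h : ℝ) * (2 * (P : ℝ) + (K : ℝ) * (m : ℝ)) := by
      have hc : ((4 * X : ℤ) : ℝ) ≤ (((h : ℤ) * (2 * P + K * m) : ℤ) : ℝ) := by
        exact_mod_cast step3
      push_cast at hc
      linarith
    have hfin := final_arith K hK2 β hβK
    rw [← hmdef, ← hPdef, ← hAdef] at hfin
    have hfinR : 2 * (P : ℝ) + (K : ℝ) * (m : ℝ) + 4 * (A : ℝ) ≤ 4 * β * (P : ℝ) := by
      have := hfin
      push_cast at this
      convert this using 2 <;> push_cast <;> ring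
    have hh0R : (0:ℝ) < (h : ℝ) := by exact_mod_cast hh1
    nlinarith [step4, hstep3R, hfinR, hh0R]
  -- construct the deduplication
  obtain ⟨i, g, hg1, hg2, hig, hdle⟩ := hgood
  have hg0 : 0 < g := hg1
  set p := i * h with hpdef
  set L := g * h with hLdef
  have hL1 : 1 ≤ L := by
    calc 1 = 1 * 1 := by norm_num
      _ ≤ g * h := Nat.mul_le_mul hg1 hh1
  have hpLL : p + 2 * L ≤ n := by
    calc p + 2 * L = (i + 2 * g) * h := by rw [hpdef, hLdef]; ring
      _ ≤ m * h := Nat.mul_le_mul_right h hig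
      _ ≤ n := hmh
  have hpL : (i + g) * h = p + L := by rw [hpdef, hLdef]; ring
  set u := s.take p with hudef
  set v := (s.drop p).take L with hvdef
  set v' := (s.drop (p + L)).take L with hv'def
  set w := s.drop (p + 2 * L) with hwdef
  have hvlen : v.length = L := length_drop_take s p L (by omega)
  have hv'len : v'.length = L := length_drop_take s (p + L) L (by omega)
  have hdecomp : s = u ++ (v ++ v') ++ w := by
    rw [hudef, hvdef, hv'def, hwdef]
    have e1 : s = s.take p ++ s.drop p := (List.take_append_drop p s).symm
    have e2 : s.drop p = (s.drop p).take (2 * L) ++ (s.drop p).drop (2 * L) := 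
      (List.take_append_drop (2 * L) (s.drop p)).symm
    have e3 : (s.drop p).drop (2 * L) = s.drop (p + 2 * L) := by
      rw [List.drop_drop]
    have e4 : (s.drop p).take (2 * L) = (s.drop p).take L ++ ((s.drop p).drop L).take L := by
      rw [show 2 * L = L + L by ring, List.take_add]
    have e5 : (s.drop p).drop L = s.drop (p + L) := by
      rw [List.drop_drop]
    calc s = s.take p ++ s.drop p := e1
      _ = s.take p ++ ((s.drop p).take (2 * L) ++ s.drop (p + 2 * L)) := by rw [← e3, ← e2]
      _ = s.take p ++ (((s.drop p).take L ++ (s.drop (p + L)).take L) ++ s.drop (p + 2 * L)) := by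
          rw [e4, e5]
      _ = _ := by simp [List.append_assoc]
  refine ⟨u ++ v ++ w, ⟨u, v, v', w, ?_, ?_, ?_, hdecomp, Or.inl rfl⟩, ?_⟩
  · apply List.length_pos_iff.mp
    rw [hvlen]
    omega
  · rw [hvlen, hv'len]
  · rw [hvlen]
    rw [hpL] at hdle
    exact hdle
  · have hulen : u.length = p := by
      rw [hudef, List.length_take]
      omega
    have hwlen : w.length = n - (p + 2 * L) := by
      rw [hwdef, List.length_drop]
    have hylen : (u ++ v ++ w).length = n - L := by
      rw [List.length_append, List.length_append, hulen, hvlen, hwlen]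
      omega
    rw [hylen]
    have hhL : h ≤ L := by
      calc h = 1 * h := by ring
        _ ≤ g * h := Nat.mul_le_mul_right h hg1
    omega


lemma BDedup_len_pos (β : ℝ) (x y : List Bool) (hd : BDedup β x y) : 1 ≤ y.length := by
  obtain ⟨u, v, v', w, hv, hlen, _, _, hy⟩ := hd
  have hv1 : 1 ≤ v.length := List.length_pos_iff.mpr hv
  rcases hy with hy | hy <;> subst hy <;> simp <;> omega

lemma main_bound (β : ℝ) (hβ : 1 / 2 < β) (K : ℕ) (hK2 : 2 ≤ K)
    (hβK : 1 / 2 + 1 / ((K : ℝ) - 1) ≤ β) (t : ℕ) (ht : 2 ≤ t) :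
    ∀ n : ℕ, ∀ s : List Bool, s.length ≤ n →
      ∃ j r, SqFree r ∧ BDedupSteps β j s r ∧
        (j : ℝ) ≤ ((K ^ 2 * t : ℕ) : ℝ)
          + ((K ^ 2 : ℕ) : ℝ) * (t : ℝ) / ((t : ℝ) - 1) * Real.log ((max 1 s.length : ℕ) : ℝ) := by
  have hβ0 : (0:ℝ) ≤ β := by linarith
  have htR : (2:ℝ) ≤ (t : ℝ) := by exact_mod_cast ht
  have ht1 : (0:ℝ) < (t : ℝ) - 1 := by linarith
  have hm4 : 4 ≤ K ^ 2 := by nlinarith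
  have hmR : (4:ℝ) ≤ ((K ^ 2 : ℕ) : ℝ) := by exact_mod_cast hm4
  have hc0 : (0:ℝ) ≤ ((K ^ 2 : ℕ) : ℝ) * (t : ℝ) / ((t : ℝ) - 1) := by positivity
  intro n
  induction n with
  | zero =>
    intro s hs
    obtain ⟨j, r, hj, hr, hsteps⟩ := exists_sqfree_steps β hβ0 0 s hs
    refine ⟨j, r, hr, hsteps, ?_⟩
    have hj0 : j = 0 := by omega
    subst hj0
    have hlog : (0:ℝ) ≤ Real.log ((max 1 s.length : ℕ) : ℝ) := by
      apply Real.log_nonneg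
      have h1 : 1 ≤ max 1 s.length := le_max_left _ _
      exact_mod_cast h1
    have h2 : (0:ℝ) ≤ ((K ^ 2 * t : ℕ) : ℝ) := by positivity
    nlinarith [mul_nonneg hc0 hlog]
  | succ n ih =>
    intro s hs
    by_cases hsmall : s.length < K ^ 2 * t
    · obtain ⟨j, r, hj, hr, hsteps⟩ := exists_sqfree_steps β hβ0 s.length s le_rfl
      refine ⟨j, r, hr, hsteps, ?_⟩
      have hjR : (j : ℝ) ≤ ((K ^ 2 * t : ℕ) : ℝ) := by
        have : j ≤ K ^ 2 * t := by omega
        exact_mod_cast this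
      have hlog : (0:ℝ) ≤ Real.log ((max 1 s.length : ℕ) : ℝ) := by
        apply Real.log_nonneg
        have h1 : 1 ≤ max 1 s.length := le_max_left _ _
        exact_mod_cast h1
      nlinarith [mul_nonneg hc0 hlog]
    · push_neg at hsmall
      have hm0 : 0 < K ^ 2 := by omega
      have hsK : K ^ 2 ≤ s.length := by
        have h1 : K ^ 2 * 1 ≤ K ^ 2 * t := Nat.mul_le_mul_left _ (by omega)
        omega
      obtain ⟨y, hd, hylen⟩ := exists_dedup β hβ K hK2 hβK s hsK
      have hy1 : 1 ≤ y.length := BDedup_len_pos β s y hd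
      have hdiv1 : 1 ≤ s.length / K ^ 2 := (Nat.one_le_div_iff hm0).mpr hsK
      have hyn : y.length ≤ n := by omega
      obtain ⟨j, r, hr, hsteps, hjb⟩ := ih y hyn
      refine ⟨j + 1, r, hr, ⟨y, hd, hsteps⟩, ?_⟩
      have hmaxy : ((max 1 y.length : ℕ) : ℝ) = (y.length : ℝ) := by congr 1; omega
      have hmaxs : ((max 1 s.length : ℕ) : ℝ) = (s.length : ℝ) := by
        congr 1
        omega
      rw [hmaxy] at hjb
      rw [hmaxs]
      have hyR1 : (1:ℝ) ≤ (y.length : ℝ) := by exact_mod_cast hy1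
      have hmpos : (0:ℝ) < ((K^2:ℕ):ℝ) := by linarith
      have htpos : (0:ℝ) < (t:ℝ) := by linarith
      have hlenbig : ((K^2:ℕ):ℝ) * (t:ℝ) ≤ (s.length:ℝ) := by exact_mod_cast hsmall
      have hlen0 : (0:ℝ) < (s.length:ℝ) := by nlinarith
      have hdm := Nat.div_add_mod s.length (K ^ 2)
      have hmod : s.length % K ^ 2 < K ^ 2 := Nat.mod_lt _ hm0
      have hcast : (s.length : ℝ)
          = ((K^2:ℕ):ℝ) * ((s.length / K ^ 2 : ℕ):ℝ) + ((s.length % K ^ 2 : ℕ):ℝ) := by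
        exact_mod_cast hdm.symm
      have hmodR : ((s.length % K ^ 2 : ℕ):ℝ) < ((K^2:ℕ):ℝ) := by exact_mod_cast hmod
      have hDlow : (s.length:ℝ) / ((K^2:ℕ):ℝ) - 1 < ((s.length / K ^ 2 : ℕ):ℝ) := by
        have h2 : (s.length:ℝ) / ((K^2:ℕ):ℝ) < ((s.length / K ^ 2 : ℕ):ℝ) + 1 := by
          rw [div_lt_iff₀ hmpos]
          nlinarith
        linarith
      have hyRb : (y.length:ℝ) ≤ (s.length:ℝ) - ((s.length / K ^ 2 : ℕ):ℝ) := by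
        have h3 := (Nat.cast_le (α := ℝ)).mpr hylen
        push_cast at h3
        linarith
      have h1tm : (1:ℝ) ≤ (s.length:ℝ) / ((t:ℝ) * ((K^2:ℕ):ℝ)) := by
        rw [le_div_iff₀ (by positivity)]
        nlinarith
      set ρ : ℝ := 1 - 1 / ((K^2:ℕ):ℝ) + 1 / ((t:ℝ) * ((K^2:ℕ):ℝ)) with hρdef
      have hρpos : (0:ℝ) < ρ := by
        have h1 : 1 / ((K^2:ℕ):ℝ) ≤ 1 / 4 := by
          apply one_div_le_one_div_of_le <;> linarith
        have h2 : (0:ℝ) < 1 / ((t:ℝ) * ((K^2:ℕ):ℝ)) := by positivity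
        rw [hρdef]; linarith
      have hyρ : (y.length:ℝ) ≤ (s.length:ℝ) * ρ := by
        have e : (s.length:ℝ) * ρ = (s.length:ℝ) - (s.length:ℝ)/((K^2:ℕ):ℝ)
            + (s.length:ℝ)/((t:ℝ)*((K^2:ℕ):ℝ)) := by
          rw [hρdef]; field_simp
        rw [e]; linarith
      have hlog1 : Real.log (y.length:ℝ) ≤ Real.log (s.length:ℝ) + Real.log ρ := by
        calc Real.log (y.length:ℝ) ≤ Real.log ((s.length:ℝ) * ρ) :=
              Real.log_le_log (by linarith) hyρ
          _ = _ := Real.log_mul (by linarith) (by linarith)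
      have hlogρ : Real.log ρ ≤ ρ - 1 := Real.log_le_sub_one_of_pos hρpos
      have hcρ : ((K^2:ℕ):ℝ) * (t:ℝ) / ((t:ℝ) - 1) * (ρ - 1) = -1 := by
        rw [hρdef]
        field_simp
        ring
      have h4 : ((K^2:ℕ):ℝ) * (t:ℝ) / ((t:ℝ) - 1) * Real.log (y.length:ℝ)
          ≤ ((K^2:ℕ):ℝ) * (t:ℝ) / ((t:ℝ) - 1) * (Real.log (s.length:ℝ) + Real.log ρ) :=
        mul_le_mul_of_nonneg_left hlog1 hc0
      have h5 : ((K^2:ℕ):ℝ) * (t:ℝ) / ((t:ℝ) - 1) * Real.log ρ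
          ≤ ((K^2:ℕ):ℝ) * (t:ℝ) / ((t:ℝ) - 1) * (ρ - 1) :=
        mul_le_mul_of_nonneg_left hlogρ hc0
      rw [hcρ] at h5
      have h4' : ((K^2:ℕ):ℝ) * (t:ℝ) / ((t:ℝ) - 1) * Real.log (y.length:ℝ)
          ≤ ((K^2:ℕ):ℝ) * (t:ℝ) / ((t:ℝ) - 1) * Real.log (s.length:ℝ)
            + ((K^2:ℕ):ℝ) * (t:ℝ) / ((t:ℝ) - 1) * Real.log ρ := by
        calc ((K^2:ℕ):ℝ) * (t:ℝ) / ((t:ℝ) - 1) * Real.log (y.length:ℝ)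
            ≤ ((K^2:ℕ):ℝ) * (t:ℝ) / ((t:ℝ) - 1) * (Real.log (s.length:ℝ) + Real.log ρ) := h4
          _ = _ := by ring
      push_cast at h4' h5
      push_cast
      push_cast at hjb
      linarith [h4', h5, hjb]

lemma ceil_facts (β : ℝ) (hβ : 1 / 2 < β) :
    2 ≤ ⌈(2 * β + 1) / (2 * β - 1)⌉ ∧
      1 / 2 + 1 / ((⌈(2 * β + 1) / (2 * β - 1)⌉ : ℝ) - 1) ≤ β := by
  have h2 : (0:ℝ) < 2 * β - 1 := by linarith
  have hr1 : (1:ℝ) < (2 * β + 1) / (2 * β - 1) := by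
    rw [lt_div_iff₀ h2]; linarith
  have hceil : ((2 * β + 1) / (2 * β - 1) : ℝ) ≤ (⌈(2 * β + 1) / (2 * β - 1)⌉ : ℝ) :=
    Int.le_ceil _
  have hk1 : (1:ℝ) < (⌈(2 * β + 1) / (2 * β - 1)⌉ : ℝ) := lt_of_lt_of_le hr1 hceil
  have hk2 : 2 ≤ ⌈(2 * β + 1) / (2 * β - 1)⌉ := by
    have : (1:ℤ) < ⌈(2 * β + 1) / (2 * β - 1)⌉ := by exact_mod_cast hk1
    omega
  refine ⟨hk2, ?_⟩
  set k : ℝ := (⌈(2 * β + 1) / (2 * β - 1)⌉ : ℝ) with hkdef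
  have hineq : 2 * β + 1 ≤ k * (2 * β - 1) := by
    rw [div_le_iff₀ h2] at hceil
    linarith
  have hk1' : (0:ℝ) < k - 1 := by linarith
  have hkey : 2 ≤ (k - 1) * (2 * β - 1) := by nlinarith
  have : 1 / (k - 1) ≤ (2 * β - 1) / 2 := by
    rw [div_le_div_iff₀ hk1' (by norm_num)]
    linarith
  linarith

theorem approx_dedup_log_above_half (β : ℝ) (hβ : 1 / 2 < β) (C : ℝ)
    (hC : ((⌈(2 * β + 1) / (2 * β - 1)⌉ : ℝ)) ^ 2 < C) :
    ∃ N : ℕ, ∀ n : ℕ, N ≤ n → (bfmax β n : ℝ) ≤ C * Real.log n := by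
  obtain ⟨hk2, hβk⟩ := ceil_facts β hβ
  set kz : ℤ := ⌈(2 * β + 1) / (2 * β - 1)⌉ with hkz
  set K : ℕ := kz.toNat with hKdef
  have hK2 : 2 ≤ K := by omega
  have hKcast : (K : ℝ) = (kz : ℝ) := by
    rw [hKdef]
    exact_mod_cast Int.toNat_of_nonneg (by omega)
  have hβK : 1 / 2 + 1 / ((K : ℝ) - 1) ≤ β := by rw [hKcast]; exact hβk
  have hmC : ((K ^ 2 : ℕ) : ℝ) < C := by
    push_cast
    rw [hKcast]
    exact hC
  set mR : ℝ := ((K ^ 2 : ℕ) : ℝ) with hmRdef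
  have hm1 : (1:ℝ) ≤ mR := by
    rw [hmRdef]
    have h1 : 1 ≤ K ^ 2 := by nlinarith
    exact_mod_cast h1
  have hCm : (0:ℝ) < C - mR := by linarith
  -- choose t
  set t : ℕ := ⌈C / (C - mR)⌉₊ + 2 with htdef
  have ht2 : 2 ≤ t := by omega
  have htR : C / (C - mR) < (t : ℝ) := by
    have h1 : C / (C - mR) ≤ (⌈C / (C - mR)⌉₊ : ℝ) := Nat.le_ceil _
    have h2 : ((⌈C / (C - mR)⌉₊ : ℕ) : ℝ) < (t : ℝ) := by
      rw [htdef]; push_cast; linarith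
    linarith
  have htR1 : (0:ℝ) < (t : ℝ) - 1 := by
    have : (2:ℝ) ≤ (t:ℝ) := by exact_mod_cast ht2
    linarith
  set c : ℝ := mR * (t : ℝ) / ((t : ℝ) - 1) with hcdef
  have hcC : c < C := by
    rw [hcdef, div_lt_iff₀ htR1]
    have h1 : C < (t : ℝ) * (C - mR) := by
      rw [div_lt_iff₀ hCm] at htR
      linarith
    nlinarith
  have hc0 : (0:ℝ) ≤ c := by positivity
  -- choose N
  set n0 : ℕ := K ^ 2 * t with hn0def
  set N : ℕ := ⌈Real.exp ((n0 : ℝ) / (C - c))⌉₊ + 1 with hNdef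
  refine ⟨N, ?_⟩
  intro n hn
  have hn1 : 1 ≤ n := by omega
  have hnR1 : (1:ℝ) ≤ (n : ℝ) := by exact_mod_cast hn1
  have hlogn : (n0 : ℝ) / (C - c) ≤ Real.log n := by
    have h1 : Real.exp ((n0 : ℝ) / (C - c)) ≤ (N : ℝ) := by
      calc Real.exp ((n0 : ℝ) / (C - c)) ≤ (⌈Real.exp ((n0 : ℝ) / (C - c))⌉₊ : ℝ) := Nat.le_ceil _
        _ ≤ (N : ℝ) := by rw [hNdef]; push_cast; linarith
    have h2 : (N : ℝ) ≤ (n : ℝ) := by exact_mod_cast hn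
    have h3 : Real.exp ((n0 : ℝ) / (C - c)) ≤ (n : ℝ) := by linarith
    calc (n0 : ℝ) / (C - c) = Real.log (Real.exp ((n0 : ℝ) / (C - c))) := (Real.log_exp _).symm
      _ ≤ Real.log n := Real.log_le_log (Real.exp_pos _) h3
  have hCc : (0:ℝ) < C - c := by linarith
  have hbound : (n0 : ℝ) + c * Real.log n ≤ C * Real.log n := by
    have h1 : (n0 : ℝ) ≤ (C - c) * Real.log n := by
      rw [div_le_iff₀ hCc] at hlogn
      linarith
    nlinarith
  -- bound every bdist
  have hkey : ∀ v ∈ bdist β '' {s : List Bool | s.length = n}, v ≤ ⌊(n0 : ℝ) + c * Real.log n⌋₊ := by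
    rintro v ⟨s, hsl, rfl⟩
    simp only [Set.mem_setOf_eq] at hsl
    obtain ⟨j, r, hr, hsteps, hjb⟩ := main_bound β hβ K hK2 hβK t ht2 n s (le_of_eq hsl)
    have hmax : max 1 s.length = n := by omega
    rw [hmax] at hjb
    have hbd : bdist β s ≤ j := Nat.sInf_le ⟨r, hr, hsteps⟩
    have hjfloor : j ≤ ⌊(n0 : ℝ) + c * Real.log n⌋₊ := by
      apply Nat.le_floor
      calc (j : ℝ) ≤ ((K ^ 2 * t : ℕ) : ℝ) + c * Real.log n := by
            rw [hcdef, hmRdef]; exact hjb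
        _ = (n0 : ℝ) + c * Real.log n := by rw [hn0def]
    omega
  have hne : (bdist β '' {s : List Bool | s.length = n}).Nonempty := by
    refine ⟨bdist β (List.replicate n false), ⟨List.replicate n false, ?_, rfl⟩⟩
    simp
  have hsup : bfmax β n ≤ ⌊(n0 : ℝ) + c * Real.log n⌋₊ := csSup_le hne hkey
  have hfl : (0:ℝ) ≤ (n0 : ℝ) + c * Real.log n := by
    have : (0:ℝ) ≤ c * Real.log n := mul_nonneg hc0 (Real.log_nonneg hnR1)
    positivity
  calc (bfmax β n : ℝ) ≤ ((⌊(n0 : ℝ) + c * Real.log n⌋₊ : ℕ) : ℝ) := by exact_mod_cast hsup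
    _ ≤ (n0 : ℝ) + c * Real.log n := Nat.floor_le hfl
    _ ≤ C * Real.log n := hbound
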